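/- arXiv:2103.05816 — 2 statements merged into one kernel-verified Lean document; each statement's English description precedes it below -/
import Mathlib

section
/- The villainy of P_3 + rK_1 (a path on 3 vertices plus r isolated vertices) equals 2 for every r ≥ 0. -/
open Finset

variable {V : Type*}

/-- A proper coloring given as a function to ℕ. -/
def IsProperColoring (G : SimpleGraph V) (c : V → ℕ) : Prop :=
  ∀ ⦃u v⦄, G.Adj u v → c u ≠ c v

variable [Fintype V] [DecidableEq V]

/-- Two colorings use every color the same number of times. -/
def SameColorCounts (c c' : V → ℕ) : Prop :=
  ∀ k : ℕ, (univ.filter fun v => c v = k).card = (univ.filter fun v => c' v = k).card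

/-- The number of vertices on which two colorings differ. -/
def recolorCount (c c' : V → ℕ) : ℕ := (univ.filter fun v => c v ≠ c' v).card

/-- The ℕ-valued chromatic number. -/
noncomputable def chromNum (G : SimpleGraph V) : ℕ := G.chromaticNumber.toNat

/-- A proper coloring of `G` using exactly `χ(G)` colors. -/
noncomputable def IsOptimalColoring (G : SimpleGraph V) (f : V → ℕ) : Prop :=
  IsProperColoring G f ∧ (univ.image f).card = chromNum G

/-- The villainy of a coloring `c`: the least number of vertices that must be
recolored to obtain a proper coloring using each color as often as `c` does. -/
noncomputable def colVillainy (G : SimpleGraph V) (c : V → ℕ) : ℕ :=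
  sInf {n | ∃ c', IsProperColoring G c' ∧ SameColorCounts c c' ∧ recolorCount c c' = n}

/-- `c` is a permutation of the coloring `f`. -/
def IsPermutationOf (c f : V → ℕ) : Prop := ∃ σ : Equiv.Perm V, c = f ∘ σ

/-- The villainy of `G`: the maximum villainy over all permutations of optimal
proper colorings of `G`. -/
noncomputable def villainy (G : SimpleGraph V) : ℕ :=
  sSup {n | ∃ f c, IsOptimalColoring G f ∧ IsPermutationOf c f ∧ colVillainy G c = n}

section MyAux

set_option linter.unusedSectionVars false

lemma card_filter_comp_equiv (τ : Equiv.Perm V) (p : V → Prop) [DecidablePred p] :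
    (univ.filter fun v => p (τ v)).card = (univ.filter p).card := by
  apply Finset.card_bij (fun v _ => τ v)
  · intro a ha; simp_all
  · intro a ha b hb hab; exact τ.injective hab
  · intro b hb; exact ⟨τ.symm b, by simp_all, by simp⟩

lemma sameCounts_comp (c : V → ℕ) (τ : Equiv.Perm V) : SameColorCounts c (c ∘ τ) :=
  fun k => (card_filter_comp_equiv τ (fun w => c w = k)).symm

lemma recolor_comp_swap_le (c : V → ℕ) (u w : V) :
    recolorCount c (c ∘ Equiv.swap u w) ≤ 2 := by
  have hsub : (univ.filter fun v => c v ≠ (c ∘ Equiv.swap u w) v) ⊆ {u, w} := by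
    intro v hv
    simp only [mem_filter, Function.comp_apply] at hv
    by_contra hmem
    simp only [mem_insert, mem_singleton, not_or] at hmem
    rw [Equiv.swap_apply_of_ne_of_ne hmem.1 hmem.2] at hv
    exact hv.2 rfl
  calc (univ.filter fun v => c v ≠ (c ∘ Equiv.swap u w) v).card
      ≤ ({u, w} : Finset V).card := Finset.card_le_card hsub
    _ ≤ 2 := Finset.card_insert_le u {w} |>.trans (by simp)

lemma recolorCount_ne_one {c c' : V → ℕ} (h : SameColorCounts c c') :
    recolorCount c c' ≠ 1 := by
  intro h1
  obtain ⟨v, hv⟩ := Finset.card_eq_one.mp h1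
  have hvv : c v ≠ c' v := by
    have : v ∈ univ.filter fun w => c w ≠ c' w := hv ▸ Finset.mem_singleton_self v
    simpa using this
  have hoff : ∀ w, w ≠ v → c w = c' w := by
    intro w hw
    by_contra hcw
    have : w ∈ ({v} : Finset V) := hv ▸ (by simp [hcw])
    exact hw (Finset.mem_singleton.mp this)
  have hk := h (c v)
  have heq : (univ.filter fun w => c' w = c v) = (univ.filter fun w => c w = c v).erase v := by
    ext w
    simp only [mem_filter, mem_univ, true_and, Finset.mem_erase]
    constructor
    · intro hw
      rcases eq_or_ne w v with rfl | hne
      · exact (hvv hw.symm).elim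
      · exact ⟨hne, (hoff w hne) ▸ hw⟩
    · rintro ⟨hne, hw⟩
      exact (hoff w hne).symm ▸ hw
  rw [heq, Finset.card_erase_of_mem (by simp)] at hk
  have hpos : 0 < (univ.filter fun w => c w = c v).card :=
    Finset.card_pos.mpr ⟨v, by simp⟩
  omega

lemma recolorCount_eq_zero {c c' : V → ℕ} (h : recolorCount c c' = 0) : c = c' := by
  funext v
  by_contra hv
  have hmem : v ∈ univ.filter fun w => c w ≠ c' w := by simp [hv]
  rw [recolorCount, Finset.card_eq_zero] at h
  simp [h] at hmem

end MyAux

section MyGraph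

variable {r : ℕ}

abbrev myG (r : ℕ) : SimpleGraph (Fin 3 ⊕ Fin r) :=
  SimpleGraph.pathGraph 3 ⊕g (⊥ : SimpleGraph (Fin r))

lemma adj01 : (myG r).Adj (Sum.inl 0) (Sum.inl 1) := by
  show (SimpleGraph.pathGraph 3).Adj 0 1
  rw [SimpleGraph.pathGraph_adj]; norm_num

lemma adj12 : (myG r).Adj (Sum.inl 1) (Sum.inl 2) := by
  show (SimpleGraph.pathGraph 3).Adj 1 2
  rw [SimpleGraph.pathGraph_adj]; norm_num

lemma proper_of_path (c : Fin 3 ⊕ Fin r → ℕ)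
    (h01 : c (Sum.inl 0) ≠ c (Sum.inl 1)) (h12 : c (Sum.inl 1) ≠ c (Sum.inl 2)) :
    IsProperColoring (myG r) c := by
  rintro (u | u) (v | v) hadj
  · have h' : (SimpleGraph.pathGraph 3).Adj u v := hadj
    rw [SimpleGraph.pathGraph_adj] at h'
    fin_cases u <;> fin_cases v <;> simp_all <;> omega
  · simp at hadj
  · simp at hadj
  · simp at hadj

lemma chromNum_myG : chromNum (myG r) = 2 := by
  have h : (myG r).chromaticNumber = 2 := by
    apply le_antisymm
    · have hc : (myG r).Colorable 2 := by
        refine ⟨SimpleGraph.Coloring.mk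
          (Sum.elim (fun u => if u.val = 1 then 1 else 0) (fun _ => 0)) ?_⟩
        rintro (u | u) (v | v) hadj <;> (try (simp at hadj; done))
        have h' : (SimpleGraph.pathGraph 3).Adj u v := hadj
        simp only [Sum.elim_inl]
        rw [SimpleGraph.pathGraph_adj] at h'
        have hu := u.isLt; have hv := v.isLt
        split_ifs <;> simp_all <;> omega
      exact hc.chromaticNumber_le
    · calc (2 : ℕ∞) = (SimpleGraph.pathGraph 3).chromaticNumber :=
            (SimpleGraph.chromaticNumber_pathGraph 3 (by norm_num)).symm
        _ ≤ _ := SimpleGraph.chromaticNumber_mono_of_hom SimpleGraph.Embedding.sumInl.toHom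
  rw [chromNum, h]; rfl

lemma colVillainy_le_two (f : Fin 3 ⊕ Fin r → ℕ) (σ : Equiv.Perm (Fin 3 ⊕ Fin r))
    (hopt : IsOptimalColoring (myG r) f) :
    colVillainy (myG r) (f ∘ σ) ≤ 2 := by
  obtain ⟨hfp, hfcard⟩ := hopt
  have hab : f (Sum.inl 0) ≠ f (Sum.inl 1) := hfp adj01
  have hb2 : f (Sum.inl 1) ≠ f (Sum.inl 2) := hfp adj12
  have hcard2 : (univ.image f).card = 2 := by rw [hfcard, chromNum_myG]
  have himage : ({f (Sum.inl 0), f (Sum.inl 1)} : Finset ℕ) = univ.image f := by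
    apply Finset.eq_of_subset_of_card_le
    · intro x hx
      simp only [mem_insert, mem_singleton] at hx
      rcases hx with rfl | rfl <;> exact Finset.mem_image_of_mem f (mem_univ _)
    · rw [hcard2, Finset.card_pair hab]
  have hmem : ∀ v, f v = f (Sum.inl 0) ∨ f v = f (Sum.inl 1) := by
    intro v
    have : f v ∈ ({f (Sum.inl 0), f (Sum.inl 1)} : Finset ℕ) :=
      himage ▸ Finset.mem_image_of_mem f (mem_univ v)
    simpa using this
  have hf2 : f (Sum.inl 2) = f (Sum.inl 0) := by
    rcases hmem (Sum.inl 2) with h | h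
    · exact h
    · exact (hb2 h.symm).elim
  have hcount : ∀ k, (univ.filter fun v => (f ∘ σ) v = k).card
      = (univ.filter fun v => f v = k).card :=
    fun k => card_filter_comp_equiv σ (fun w => f w = k)
  have hA : 1 ≤ (univ.filter fun v => (f ∘ σ) v = f (Sum.inl 0)).card := by
    rw [hcount]
    exact Finset.card_pos.mpr ⟨Sum.inl 0, by simp⟩
  have hB : 1 ≤ (univ.filter fun v => (f ∘ σ) v = f (Sum.inl 1)).card := by
    rw [hcount]
    exact Finset.card_pos.mpr ⟨Sum.inl 1, by simp⟩
  have hmemc : ∀ v, (f ∘ σ) v = f (Sum.inl 0) ∨ (f ∘ σ) v = f (Sum.inl 1) :=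
    fun v => hmem (σ v)
  suffices h : ∃ u w : Fin 3 ⊕ Fin r,
      (f ∘ σ) (Equiv.swap u w (Sum.inl 0)) ≠ (f ∘ σ) (Equiv.swap u w (Sum.inl 1)) ∧
      (f ∘ σ) (Equiv.swap u w (Sum.inl 1)) ≠ (f ∘ σ) (Equiv.swap u w (Sum.inl 2)) by
    obtain ⟨u, w, h1, h2⟩ := h
    have hmem2 : recolorCount (f ∘ σ) ((f ∘ σ) ∘ Equiv.swap u w) ∈
        {n | ∃ c', IsProperColoring (myG r) c' ∧ SameColorCounts (f ∘ σ) c' ∧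
          recolorCount (f ∘ σ) c' = n} :=
      ⟨(f ∘ σ) ∘ Equiv.swap u w, proper_of_path _ h1 h2, sameCounts_comp _ _, rfl⟩
    exact (Nat.sInf_le hmem2).trans (recolor_comp_swap_le _ u w)
  have ne01 : (Sum.inl 0 : Fin 3 ⊕ Fin r) ≠ Sum.inl 1 := by simp
  have ne02 : (Sum.inl 0 : Fin 3 ⊕ Fin r) ≠ Sum.inl 2 := by simp
  have ne12 : (Sum.inl 1 : Fin 3 ⊕ Fin r) ≠ Sum.inl 2 := by simp
  rcases hmemc (Sum.inl 0) with hx | hx <;> rcases hmemc (Sum.inl 1) with hy | hy <;>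
    rcases hmemc (Sum.inl 2) with hz | hz
  · -- (a,a,a): swap inl1 with a b-colored vertex
    obtain ⟨w, hw⟩ := Finset.card_pos.mp hB
    simp only [mem_filter, mem_univ, true_and] at hw
    have hw0 : (Sum.inl 0 : Fin 3 ⊕ Fin r) ≠ w := by
      intro h; rw [← h, hx] at hw; exact hab hw
    have hw2 : (Sum.inl 2 : Fin 3 ⊕ Fin r) ≠ w := by
      intro h; rw [← h, hz] at hw; exact hab hw
    refine ⟨Sum.inl 1, w, ?_, ?_⟩
    · rw [Equiv.swap_apply_of_ne_of_ne ne01 hw0, Equiv.swap_apply_left, hx, hw]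
      exact hab
    · rw [Equiv.swap_apply_left, Equiv.swap_apply_of_ne_of_ne ne12.symm hw2, hw, hz]
      exact hab.symm
  · -- (a,a,b): swap inl1 inl2
    refine ⟨Sum.inl 1, Sum.inl 2, ?_, ?_⟩
    · rw [Equiv.swap_apply_of_ne_of_ne ne01 ne02, Equiv.swap_apply_left, hx, hz]
      exact hab
    · rw [Equiv.swap_apply_left, Equiv.swap_apply_right, hz, hy]
      exact hab.symm
  · -- (a,b,a): identity
    refine ⟨Sum.inl 0, Sum.inl 0, ?_, ?_⟩ <;> rw [Equiv.swap_self] <;>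
      simp only [Equiv.refl_apply]
    · rw [hx, hy]; exact hab
    · rw [hy, hz]; exact hab.symm
  · -- (a,b,b): swap inl0 inl1
    refine ⟨Sum.inl 0, Sum.inl 1, ?_, ?_⟩
    · rw [Equiv.swap_apply_left, Equiv.swap_apply_right, hy, hx]
      exact hab.symm
    · rw [Equiv.swap_apply_right, Equiv.swap_apply_of_ne_of_ne ne02.symm ne12.symm, hx, hz]
      exact hab
  · -- (b,a,a): swap inl0 inl1
    refine ⟨Sum.inl 0, Sum.inl 1, ?_, ?_⟩
    · rw [Equiv.swap_apply_left, Equiv.swap_apply_right, hy, hx]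
      exact hab
    · rw [Equiv.swap_apply_right, Equiv.swap_apply_of_ne_of_ne ne02.symm ne12.symm, hx, hz]
      exact hab.symm
  · -- (b,a,b): identity
    refine ⟨Sum.inl 0, Sum.inl 0, ?_, ?_⟩ <;> rw [Equiv.swap_self] <;>
      simp only [Equiv.refl_apply]
    · rw [hx, hy]; exact hab.symm
    · rw [hy, hz]; exact hab
  · -- (b,b,a): swap inl1 inl2
    refine ⟨Sum.inl 1, Sum.inl 2, ?_, ?_⟩
    · rw [Equiv.swap_apply_of_ne_of_ne ne01 ne02, Equiv.swap_apply_left, hx, hz]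
      exact hab.symm
    · rw [Equiv.swap_apply_left, Equiv.swap_apply_right, hz, hy]
      exact hab
  · -- (b,b,b): swap inl1 with an a-colored vertex
    obtain ⟨w, hw⟩ := Finset.card_pos.mp hA
    simp only [mem_filter, mem_univ, true_and] at hw
    have hw0 : (Sum.inl 0 : Fin 3 ⊕ Fin r) ≠ w := by
      intro h; rw [← h, hx] at hw; exact hab hw.symm
    have hw2 : (Sum.inl 2 : Fin 3 ⊕ Fin r) ≠ w := by
      intro h; rw [← h, hz] at hw; exact hab hw.symm
    refine ⟨Sum.inl 1, w, ?_, ?_⟩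
    · rw [Equiv.swap_apply_of_ne_of_ne ne01 hw0, Equiv.swap_apply_left, hx, hw]
      exact hab.symm
    · rw [Equiv.swap_apply_left, Equiv.swap_apply_of_ne_of_ne ne12.symm hw2, hw, hz]
      exact hab

end MyGraph

theorem villainy_P3_plus_isolated (r : ℕ) :
    villainy (SimpleGraph.pathGraph 3 ⊕g (⊥ : SimpleGraph (Fin r))) = 2 := by
  classical
  have hbound : ∀ n ∈ {n | ∃ f c, IsOptimalColoring (myG r) f ∧ IsPermutationOf c f ∧
      colVillainy (myG r) c = n}, n ≤ 2 := by
    rintro n ⟨f, c, hopt, ⟨σ, rfl⟩, rfl⟩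
    exact colVillainy_le_two f σ hopt
  -- the extremal example
  set f₀ : Fin 3 ⊕ Fin r → ℕ :=
    Sum.elim (fun u => if u.val = 1 then 1 else 0) (fun _ => 0) with hf₀
  have hv0 : f₀ (Sum.inl 0) = 0 := by simp [hf₀]
  have hv1 : f₀ (Sum.inl 1) = 1 := by simp [hf₀]
  have hv2 : f₀ (Sum.inl 2) = 0 := by simp [hf₀]
  have hf₀p : IsProperColoring (myG r) f₀ :=
    proper_of_path f₀ (by rw [hv0, hv1]; norm_num) (by rw [hv1, hv2]; norm_num)
  have himg : univ.image f₀ = {0, 1} := by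
    apply subset_antisymm
    · intro x hx
      simp only [mem_image] at hx
      obtain ⟨v, -, rfl⟩ := hx
      rcases v with u | u
      · simp only [hf₀, Sum.elim_inl]; split_ifs <;> simp
      · simp [hf₀]
    · intro x hx
      simp only [mem_insert, mem_singleton] at hx
      rcases hx with rfl | rfl
      · exact hv0 ▸ Finset.mem_image_of_mem f₀ (mem_univ (Sum.inl 0))
      · exact hv1 ▸ Finset.mem_image_of_mem f₀ (mem_univ (Sum.inl 1))
  have hopt₀ : IsOptimalColoring (myG r) f₀ := by
    refine ⟨hf₀p, ?_⟩
    rw [himg, chromNum_myG]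
    norm_num
  set σ₀ : Equiv.Perm (Fin 3 ⊕ Fin r) := Equiv.swap (Sum.inl 1) (Sum.inl 2) with hσ₀
  set c₀ : Fin 3 ⊕ Fin r → ℕ := f₀ ∘ σ₀ with hc₀
  have ne01 : (Sum.inl 0 : Fin 3 ⊕ Fin r) ≠ Sum.inl 1 := by simp
  have ne02 : (Sum.inl 0 : Fin 3 ⊕ Fin r) ≠ Sum.inl 2 := by simp
  have hc0 : c₀ (Sum.inl 0) = 0 := by
    rw [hc₀, Function.comp_apply, hσ₀, Equiv.swap_apply_of_ne_of_ne ne01 ne02, hv0]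
  have hc1 : c₀ (Sum.inl 1) = 0 := by
    rw [hc₀, Function.comp_apply, hσ₀, Equiv.swap_apply_left, hv2]
  have hc2 : c₀ (Sum.inl 2) = 1 := by
    rw [hc₀, Function.comp_apply, hσ₀, Equiv.swap_apply_right, hv1]
  have ne12 : (Sum.inl 1 : Fin 3 ⊕ Fin r) ≠ Sum.inl 2 := by simp
  -- colVillainy of c₀ is 2
  have h2in : 2 ∈ {n | ∃ c', IsProperColoring (myG r) c' ∧ SameColorCounts c₀ c' ∧
      recolorCount c₀ c' = n} := by
    refine ⟨c₀ ∘ Equiv.swap (Sum.inl 1) (Sum.inl 2), ?_, sameCounts_comp _ _, ?_⟩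
    · apply proper_of_path
      · show c₀ (Equiv.swap (Sum.inl 1) (Sum.inl 2) (Sum.inl 0)) ≠
          c₀ (Equiv.swap (Sum.inl 1) (Sum.inl 2) (Sum.inl 1))
        rw [Equiv.swap_apply_of_ne_of_ne ne01 ne02, Equiv.swap_apply_left, hc0, hc2]
        norm_num
      · show c₀ (Equiv.swap (Sum.inl 1) (Sum.inl 2) (Sum.inl 1)) ≠
          c₀ (Equiv.swap (Sum.inl 1) (Sum.inl 2) (Sum.inl 2))
        rw [Equiv.swap_apply_left, Equiv.swap_apply_right, hc2, hc1]
        norm_num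
    · have hset : (univ.filter fun v => c₀ v ≠ (c₀ ∘ Equiv.swap (Sum.inl 1) (Sum.inl 2)) v)
          = {Sum.inl 1, Sum.inl 2} := by
        ext w
        simp only [mem_filter, mem_univ, true_and, Function.comp_apply, mem_insert,
          mem_singleton]
        constructor
        · intro hw
          by_contra hcon
          push_neg at hcon
          rw [Equiv.swap_apply_of_ne_of_ne hcon.1 hcon.2] at hw
          exact hw rfl
        · rintro (rfl | rfl)
          · rw [Equiv.swap_apply_left, hc1, hc2]; norm_num
          · rw [Equiv.swap_apply_right, hc2, hc1]; norm_num
      rw [recolorCount, hset, Finset.card_pair ne12]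
  have hlow : ∀ m ∈ {n | ∃ c', IsProperColoring (myG r) c' ∧ SameColorCounts c₀ c' ∧
      recolorCount c₀ c' = n}, 2 ≤ m := by
    rintro m ⟨c', hp', hsc', rfl⟩
    rcases Nat.lt_or_ge (recolorCount c₀ c') 2 with hlt | hge
    · interval_cases h : recolorCount c₀ c'
      · exfalso
        have hcc : c₀ = c' := recolorCount_eq_zero h
        have := hp' (adj01 (r := r))
        rw [← hcc, hc0, hc1] at this
        exact this rfl
      · exact absurd h (recolorCount_ne_one hsc')
    · exact hge
  have hcol : colVillainy (myG r) c₀ = 2 := by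
    rw [colVillainy]
    exact le_antisymm (Nat.sInf_le h2in) (le_csInf ⟨2, h2in⟩ hlow)
  have h2S : 2 ∈ {n | ∃ f c, IsOptimalColoring (myG r) f ∧ IsPermutationOf c f ∧
      colVillainy (myG r) c = n} := ⟨f₀, c₀, hopt₀, ⟨σ₀, hc₀⟩, hcol⟩
  rw [villainy]
  exact le_antisymm (csSup_le ⟨2, h2S⟩ hbound) (le_csSup ⟨2, fun n hn => hbound n hn⟩ h2S)
end

section
/- For every r ≥ 1 and t ≥ 3, the graph K_{1,t} + rK_1 (a star with t leaves plus r isolated vertices) satisfies B(K_{1,t} + rK_1) ≥ 4; in particular its villainy is not 2. -/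
open Finset

variable {V : Type*}

variable [Fintype V] [DecidableEq V]

/-- The star `K_{1,t}` with center `0` and `t` leaves. -/
def starGraph (t : ℕ) : SimpleGraph (Fin (t + 1)) :=
  SimpleGraph.fromRel fun a _ => a = 0

/- ==================== auxiliary machinery ==================== -/

/-- The coloring giving color 1 to `x` and `y`, color 0 elsewhere. -/
def pairCol {W : Type*} [DecidableEq W] (x y : W) : W → ℕ :=
  fun v => if v = x ∨ v = y then 1 else 0

lemma pairCol_left {W : Type*} [DecidableEq W] (x y : W) : pairCol x y x = 1 := by
  simp [pairCol]

lemma pairCol_right {W : Type*} [DecidableEq W] (x y : W) : pairCol x y y = 1 := by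
  simp [pairCol]

lemma pairCol_of_ne {W : Type*} [DecidableEq W] {x y v : W} (h1 : v ≠ x) (h2 : v ≠ y) :
    pairCol x y v = 0 := by
  simp [pairCol, h1, h2]

lemma pairCol_vals {W : Type*} [DecidableEq W] (x y v : W) :
    pairCol x y v = 0 ∨ pairCol x y v = 1 := by
  unfold pairCol; split_ifs <;> simp

lemma filter_pairCol_one {W : Type*} [DecidableEq W] [Fintype W] (x y : W) :
    (univ.filter fun v => pairCol x y v = 1) = {x, y} := by
  ext v
  by_cases h : v = x ∨ v = y <;> simp [pairCol, h] <;> tauto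

lemma filter_pairCol_other {W : Type*} [DecidableEq W] [Fintype W] (x y : W) (k : ℕ)
    (h0 : k ≠ 0) (h1 : k ≠ 1) :
    (univ.filter fun v => pairCol x y v = k) = ∅ := by
  ext v
  simp only [mem_filter, mem_univ, true_and, notMem_empty, iff_false]
  rcases pairCol_vals x y v with h | h <;> rw [h] <;> omega

lemma counts_comp {W : Type*} [DecidableEq W] [Fintype W] (c : W → ℕ) (σ : Equiv.Perm W)
    (k : ℕ) : (univ.filter fun v => c (σ v) = k).card = (univ.filter fun v => c v = k).card :=
  Finset.card_bij' (fun v _ => σ v) (fun v _ => σ.symm v)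
    (by simp) (by simp) (by simp) (by simp)

lemma pairCol_comp_swaps {W : Type*} [DecidableEq W] {x y x' y' : W}
    (hxy : x ≠ y) (hxy' : x ≠ y') (hx'y : x' ≠ y) (hx'y' : x' ≠ y')
    (hxx' : x ≠ x') (hyy' : y ≠ y') :
    pairCol x' y' = pairCol x y ∘ (Equiv.swap x x' * Equiv.swap y y') := by
  funext v
  simp only [Function.comp_apply, Equiv.Perm.mul_apply]
  rcases eq_or_ne v x' with rfl | h1
  · rw [Equiv.swap_apply_of_ne_of_ne hx'y hx'y', Equiv.swap_apply_right,
      pairCol_left, pairCol_left]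
  rcases eq_or_ne v y' with rfl | h2
  · rw [Equiv.swap_apply_right, Equiv.swap_apply_of_ne_of_ne hxy.symm (Ne.symm hx'y),
      pairCol_right, pairCol_right]
  rcases eq_or_ne v x with rfl | h3
  · rw [Equiv.swap_apply_of_ne_of_ne hxy hxy', Equiv.swap_apply_left,
      pairCol_of_ne hxx' hxy', pairCol_of_ne (Ne.symm hxx') hx'y]
  rcases eq_or_ne v y with rfl | h4
  · rw [Equiv.swap_apply_left, Equiv.swap_apply_of_ne_of_ne (Ne.symm hxy') (Ne.symm hx'y'),
      pairCol_of_ne (Ne.symm hx'y) hyy', pairCol_of_ne (Ne.symm hxy') (Ne.symm hyy')]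
  · rw [Equiv.swap_apply_of_ne_of_ne h4 h2, Equiv.swap_apply_of_ne_of_ne h3 h1,
      pairCol_of_ne h1 h2, pairCol_of_ne h3 h4]

theorem villainy_star_plus_isolated (t r : ℕ) (ht : 3 ≤ t) (hr : 1 ≤ r) :
    4 ≤ villainy (starGraph t ⊕g (⊥ : SimpleGraph (Fin r))) ∧
    villainy (starGraph t ⊕g (⊥ : SimpleGraph (Fin r))) ≠ 2 := by
  set G := starGraph t ⊕g (⊥ : SimpleGraph (Fin r)) with hG
  set a1 : Fin (t + 1) := ⟨1, by omega⟩ with ha1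
  set a2 : Fin (t + 1) := ⟨2, by omega⟩ with ha2
  set a3 : Fin (t + 1) := ⟨3, by omega⟩ with ha3
  set w0 : Fin r := ⟨0, hr⟩ with hw0
  -- distinctness of the leaves and center
  have d01 : (0 : Fin (t + 1)) ≠ a1 := by simp [ha1, Fin.ext_iff]
  have d02 : (0 : Fin (t + 1)) ≠ a2 := by simp [ha2, Fin.ext_iff]
  have d03 : (0 : Fin (t + 1)) ≠ a3 := by simp [ha3, Fin.ext_iff]
  have d12 : a1 ≠ a2 := by simp [ha1, ha2, Fin.ext_iff]
  have d13 : a1 ≠ a3 := by simp [ha1, ha3, Fin.ext_iff]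
  have d23 : a2 ≠ a3 := by simp [ha2, ha3, Fin.ext_iff]
  -- adjacency characterization
  have adj_iff : ∀ a b : Fin (t + 1),
      G.Adj (Sum.inl a) (Sum.inl b) ↔ a ≠ b ∧ (a = 0 ∨ b = 0) := by
    intro a b; simp [hG, starGraph]
  -- the colorings
  set g : (Fin (t + 1) ⊕ Fin r) → ℕ := pairCol (Sum.inl 0) (Sum.inr w0) with hgdef
  set c : (Fin (t + 1) ⊕ Fin r) → ℕ := pairCol (Sum.inl a1) (Sum.inl a2) with hcdef
  -- g is proper
  have hgproper : IsProperColoring G g := by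
    rintro (a | a) (b | b) hadj
    · rw [adj_iff] at hadj
      obtain ⟨hne, h0⟩ := hadj
      rcases h0 with rfl | rfl
      · rw [hgdef, pairCol_left, pairCol_of_ne (by simpa using Ne.symm hne) (by simp)]
        simp
      · rw [hgdef, pairCol_left, pairCol_of_ne (by simpa using hne) (by simp)]
        simp
    · simp [hG] at hadj
    · simp [hG] at hadj
    · simp [hG] at hadj
  -- chromatic number
  have hchrom : G.chromaticNumber = 2 := by
    have col2 : G.Colorable 2 := by
      refine ⟨SimpleGraph.Coloring.mk (fun v => if v = Sum.inl 0 then 1 else 0) ?_⟩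
      rintro (a | a) (b | b) hadj <;>
        simp only [hG, SimpleGraph.sum_adj, starGraph, SimpleGraph.fromRel_adj,
          SimpleGraph.bot_adj] at hadj
      obtain ⟨hne, h0⟩ := hadj
      rcases h0 with h0 | h0 <;> subst h0 <;>
        simp [Sum.inl.injEq, hne, Ne.symm hne]
    have hedge : G.Adj (Sum.inl 0) (Sum.inl a1) := (adj_iff 0 a1).mpr ⟨d01, Or.inl rfl⟩
    have hle : G.chromaticNumber ≤ 2 := by
      exact_mod_cast SimpleGraph.chromaticNumber_le_iff_colorable.mpr col2
    have hge : 2 ≤ G.chromaticNumber := by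
      by_contra h
      push_neg at h
      have h1 : G.chromaticNumber ≤ 1 := Order.le_of_lt_add_one (by exact_mod_cast h)
      have hcol1 : G.Colorable 1 := by
        rw [← SimpleGraph.chromaticNumber_le_iff_colorable]; exact_mod_cast h1
      obtain ⟨C⟩ := hcol1
      exact C.valid hedge (Subsingleton.elim _ _)
    exact le_antisymm hle hge
  have hchromNum : chromNum G = 2 := by rw [chromNum, hchrom]; rfl
  -- g is an optimal coloring
  have himg : (univ.image g) = {0, 1} := by
    ext k
    simp only [mem_image, mem_univ, true_and, mem_insert, mem_singleton]
    constructor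
    · rintro ⟨v, rfl⟩
      exact (pairCol_vals _ _ v).imp id id
    · rintro (rfl | rfl)
      · exact ⟨Sum.inl a1, pairCol_of_ne (by simpa using Ne.symm d01) (by simp)⟩
      · exact ⟨Sum.inl 0, pairCol_left _ _⟩
  have hopt : IsOptimalColoring G g := by
    refine ⟨hgproper, ?_⟩
    rw [himg, hchromNum]
    simp
  -- c is a permutation of g
  have hcg : c = g ∘ (Equiv.swap (Sum.inl (0 : Fin (t+1))) (Sum.inl a1) *
      Equiv.swap (Sum.inr w0) (Sum.inl a2) : Equiv.Perm (Fin (t+1) ⊕ Fin r)) := by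
    rw [hcdef, hgdef]
    exact pairCol_comp_swaps (x := Sum.inl (0 : Fin (t+1))) (y := Sum.inr w0)
      (x' := Sum.inl a1) (y' := Sum.inl a2) (by simp) (by simpa using d02) (by simp)
      (by simpa using d12) (by simpa using d01) (by simp)
  have hperm : IsPermutationOf c g := ⟨_, hcg⟩
  -- same color counts of c and g
  have hsame_cg : SameColorCounts c g := by
    intro k
    rw [hcg]
    exact counts_comp g _ k
  -- the key lower bound on colVillainy
  have hkey : 4 ≤ colVillainy G c := by
    refine le_csInf ⟨recolorCount c g, g, hgproper, hsame_cg, rfl⟩ ?_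
    rintro n ⟨c', hproper', hsame', rfl⟩
    -- c' only uses colors 0 and 1
    have hvals : ∀ v, c' v = 0 ∨ c' v = 1 := by
      intro v
      by_contra hcon
      push_neg at hcon
      have h0 := hsame' (c' v)
      rw [hcdef, filter_pairCol_other _ _ _ hcon.1 hcon.2, Finset.card_empty] at h0
      have hvmem : v ∈ univ.filter fun u => c' u = c' v := by simp
      have := Finset.card_pos.mpr ⟨v, hvmem⟩
      omega
    -- color 1 is used exactly twice by c'
    have hcount1 : (univ.filter fun v => c' v = 1).card = 2 := by
      rw [← hsame' 1, hcdef, filter_pairCol_one, Finset.card_insert_of_notMem (by simp [d12]),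
        Finset.card_singleton]
    -- the center gets color 1
    have hcenter : c' (Sum.inl 0) = 1 := by
      rcases hvals (Sum.inl 0) with h | h
      · exfalso
        have hleaf : ∀ a : Fin (t + 1), (0 : Fin (t+1)) ≠ a → c' (Sum.inl a) = 1 := by
          intro a ha
          rcases hvals (Sum.inl a) with h' | h'
          · exact absurd (h.trans h'.symm) (hproper' ((adj_iff 0 a).mpr ⟨ha, Or.inl rfl⟩))
          · exact h'
        have hsub : ({Sum.inl a1, Sum.inl a2, Sum.inl a3} : Finset (Fin (t+1) ⊕ Fin r)) ⊆
            univ.filter fun v => c' v = 1 := by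
          intro v hv
          simp only [mem_insert, mem_singleton] at hv
          rcases hv with rfl | rfl | rfl <;>
            simp [hleaf a1 d01, hleaf a2 d02, hleaf a3 d03]
        have hc3 : ({Sum.inl a1, Sum.inl a2, Sum.inl a3} : Finset (Fin (t+1) ⊕ Fin r)).card
            = 3 := by
          rw [Finset.card_insert_of_notMem (by simp [d12, d13]),
            Finset.card_insert_of_notMem (by simp [d23]), Finset.card_singleton]
        have := Finset.card_le_card hsub
        omega
      · exact h
    -- there is a second vertex with color 1, not adjacent to the center
    have hmem0 : Sum.inl (0 : Fin (t+1)) ∈ univ.filter fun v => c' v = 1 := by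
      simp [hcenter]
    obtain ⟨w, hw⟩ : ∃ w, w ∈ (univ.filter fun v => c' v = 1).erase (Sum.inl 0) := by
      refine Finset.card_pos.mp ?_
      rw [Finset.card_erase_of_mem hmem0, hcount1]
      omega
    have hwne : w ≠ Sum.inl (0 : Fin (t+1)) := (Finset.mem_erase.mp hw).1
    have hw1 : c' w = 1 := by
      have := (Finset.mem_erase.mp hw).2
      simpa using this
    -- leaves other than the center don't get color 1
    have hA : ∀ a : Fin (t + 1), a ≠ 0 → c' (Sum.inl a) ≠ 1 := by
      intro a ha h1
      exact hproper' ((adj_iff a 0).mpr ⟨ha, Or.inr rfl⟩) (by rw [h1, hcenter])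
    have hwa1 : w ≠ Sum.inl a1 := by rintro rfl; exact hA a1 (Ne.symm d01) hw1
    have hwa2 : w ≠ Sum.inl a2 := by rintro rfl; exact hA a2 (Ne.symm d02) hw1
    -- the four differing vertices
    have hsub4 : ({Sum.inl (0 : Fin (t+1)), Sum.inl a1, Sum.inl a2, w} :
        Finset (Fin (t+1) ⊕ Fin r)) ⊆ univ.filter fun v => c v ≠ c' v := by
      intro v hv
      simp only [mem_insert, mem_singleton] at hv
      simp only [mem_filter, mem_univ, true_and]
      rcases hv with rfl | rfl | rfl | rfl
      · rw [hcdef, pairCol_of_ne (by simpa using d01) (by simpa using d02), hcenter]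
        omega
      · rw [hcdef, pairCol_left]
        intro h
        exact hA a1 (Ne.symm d01) h.symm
      · rw [hcdef, pairCol_right]
        intro h
        exact hA a2 (Ne.symm d02) h.symm
      · rw [hcdef, pairCol_of_ne hwa1 hwa2, hw1]
        omega
    have hc4 : ({Sum.inl (0 : Fin (t+1)), Sum.inl a1, Sum.inl a2, w} :
        Finset (Fin (t+1) ⊕ Fin r)).card = 4 := by
      rw [Finset.card_insert_of_notMem (by simp [d01, d02, Ne.symm hwne]),
        Finset.card_insert_of_notMem (by simp [d12, Ne.symm hwa1]),
        Finset.card_insert_of_notMem (by simp [Ne.symm hwa2]), Finset.card_singleton]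
    calc 4 = ({Sum.inl (0 : Fin (t+1)), Sum.inl a1, Sum.inl a2, w} :
        Finset (Fin (t+1) ⊕ Fin r)).card := hc4.symm
      _ ≤ (univ.filter fun v => c v ≠ c' v).card := Finset.card_le_card hsub4
      _ = recolorCount c c' := rfl
  -- the villainy set is bounded above
  have hub : ∀ n ∈ {n | ∃ f c, IsOptimalColoring G f ∧ IsPermutationOf c f ∧
      colVillainy G c = n}, n ≤ Fintype.card (Fin (t+1) ⊕ Fin r) := by
    rintro n ⟨f, c0, _, _, rfl⟩
    by_cases hS : {n | ∃ c', IsProperColoring G c' ∧ SameColorCounts c0 c' ∧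
        recolorCount c0 c' = n}.Nonempty
    · obtain ⟨c', _, _, hrc⟩ := Nat.sInf_mem hS
      rw [colVillainy, ← hrc]
      exact le_trans (Finset.card_filter_le _ _) (le_of_eq Finset.card_univ)
    · rw [colVillainy, Set.not_nonempty_iff_eq_empty.mp hS, Nat.sInf_empty]
      exact Nat.zero_le _
  have hmain : 4 ≤ villainy G := by
    refine le_trans hkey (le_csSup ⟨Fintype.card (Fin (t+1) ⊕ Fin r), hub⟩ ?_)
    exact ⟨g, c, hopt, hperm, rfl⟩
  exact ⟨hmain, by omega⟩
end
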